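/- Let R be a commutative integral domain and let A = R⟦X⟧ be the ring of formal power series over R. Let L ∈ A be a power series whose constant coefficient is nonzero, and let I be an ideal of A with I ⊆ (L). If the constant coefficient of L lies in the image of I under the constant-coefficient ring homomorphism A → R, then I = (L). -/

import Mathlib

/-- Instantiation of the Skinner–Urban lifting lemma for power series rings: if `R` is a
domain, `L ∈ R⟦X⟧` has nonzero constant coefficient, `I ⊆ (L)`, and the constant
coefficient of `L` lies in the image of `I` under the constant-coefficient map, then
`I = (L)`. -/
theorem skinner_urban_power_series
    {R : Type*} [CommRing R] [IsDomain R]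
    (L : PowerSeries R) (hL : (PowerSeries.constantCoeff : PowerSeries R →+* R) L ≠ 0)
    (I : Ideal (PowerSeries R)) (hI : I ≤ Ideal.span {L})
    (hmem : (PowerSeries.constantCoeff : PowerSeries R →+* R) L ∈ I.map (PowerSeries.constantCoeff : PowerSeries R →+* R)) :
    I = Ideal.span {L} := by
  obtain ⟨f, hfI, hf⟩ := (Ideal.mem_map_iff_of_surjective _
    PowerSeries.constantCoeff_surj).mp hmem
  obtain ⟨g, rfl⟩ := Ideal.mem_span_singleton'.mp (hI hfI)
  rw [map_mul] at hf
  have hg1 : (PowerSeries.constantCoeff : PowerSeries R →+* R) g = 1 :=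
    mul_right_cancel₀ hL (hf.trans (one_mul _).symm)
  have hgu : IsUnit g := PowerSeries.isUnit_iff_constantCoeff.mpr (hg1 ▸ isUnit_one)
  refine le_antisymm hI ?_
  rw [Ideal.span_singleton_le_iff_mem]
  obtain ⟨u, rfl⟩ := hgu
  have hLeq : L = (↑u⁻¹ : PowerSeries R) * (↑u * L) := by
    rw [← mul_assoc, Units.inv_mul, one_mul]
  rw [hLeq]
  exact I.mul_mem_left _ hfI
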